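/- For every u₁ > 0 and every k with 2 ≤ k ≤ n, the identity (U_k − U_{k−1})(u₁) = h²·((1/2)·g₁(u₁) + Σ_{j=2}^{k−1} g₁(U_j(u₁))) holds, and in particular (U_k − U_{k−1})(u₁) > 0. -/

import Mathlib

open Finset

noncomputable def U (g1 : ℝ → ℝ) (h : ℝ) : ℕ → ℝ → ℝ
  | 0, u => u
  | 1, u => u
  | 2, u => u + h ^ 2 / 2 * g1 u
  | k + 3, u => 2 * U g1 h (k + 2) u - U g1 h (k + 1) u + h ^ 2 * g1 (U g1 h (k + 2) u)

lemma U_aux (g1 : ℝ → ℝ) (h : ℝ) (hhne : h ≠ 0)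
    (hg1pos : ∀ x > (0:ℝ), 0 < g1 x) (u1 : ℝ) (hu1 : 0 < u1) :
    ∀ k, 2 ≤ k →
      (U g1 h k u1 - U g1 h (k - 1) u1 =
        h ^ 2 * (1 / 2 * g1 u1 + ∑ j ∈ Finset.Icc 2 (k - 1), g1 (U g1 h j u1))) ∧
      0 < U g1 h k u1 - U g1 h (k - 1) u1 ∧ 0 < U g1 h k u1 := by
  have hh2 : 0 < h ^ 2 := by positivity
  intro k hk
  induction k, hk using Nat.le_induction with
  | base =>
    have hg : 0 < g1 u1 := hg1pos u1 hu1
    refine ⟨?_, ?_, ?_⟩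
    · simp [U]; ring
    · simp only [U, Nat.reduceSub]; nlinarith
    · simp only [U]; nlinarith
  | succ k hk ih =>
    obtain ⟨m, rfl⟩ : ∃ m, k = m + 2 := ⟨k - 2, by omega⟩
    obtain ⟨e1, e2, e3⟩ := ih
    have hgU : 0 < g1 (U g1 h (m + 2) u1) := hg1pos _ e3
    have hdef : U g1 h (m + 3) u1 =
        2 * U g1 h (m + 2) u1 - U g1 h (m + 1) u1 + h ^ 2 * g1 (U g1 h (m + 2) u1) := rfl
    have hsub1 : m + 2 - 1 = m + 1 := rfl
    have hsub2 : m + 3 - 1 = m + 2 := rfl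
    rw [hsub1] at e1 e2
    refine ⟨?_, ?_, ?_⟩
    · rw [hsub2, hdef, Finset.sum_Icc_succ_top (by omega : 2 ≤ m + 2)]
      linear_combination e1
    · rw [hsub2, hdef]; nlinarith
    · rw [hdef]; nlinarith

theorem stmt0
    (g1 g2 : ℝ → ℝ)
    (hg1C : ContDiff ℝ 3 g1) (hg2C : ContDiff ℝ 3 g2)
    (hg1A : AnalyticAt ℝ g1 0) (hg2A : AnalyticAt ℝ g2 0)
    (hg10 : g1 0 = 0) (hg20 : g2 0 = 0)
    (hg1d1 : ∀ x > 0, 0 < deriv g1 x) (hg2d1 : ∀ x > 0, 0 < deriv g2 x)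
    (hg1d2 : ∀ x > 0, 0 < iteratedDeriv 2 g1 x) (hg2d2 : ∀ x > 0, 0 < iteratedDeriv 2 g2 x)
    (hg1d3 : ∀ x > 0, 0 ≤ iteratedDeriv 3 g1 x) (hg2d3 : ∀ x > 0, 0 ≤ iteratedDeriv 3 g2 x)
    (n : ℕ) (hn : 2 ≤ n) (h : ℝ) (hh : h = 1 / ((n : ℝ) - 1))
    (u1 : ℝ) (hu1 : 0 < u1) (k : ℕ) (hk2 : 2 ≤ k) (hkn : k ≤ n) :
    U g1 h k u1 - U g1 h (k - 1) u1 =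
      h ^ 2 * (1 / 2 * g1 u1 + ∑ j ∈ Finset.Icc 2 (k - 1), g1 (U g1 h j u1)) ∧
    0 < U g1 h k u1 - U g1 h (k - 1) u1 := by
  have hn1 : (1:ℝ) ≤ (n : ℝ) - 1 := by
    have : (2:ℝ) ≤ (n:ℝ) := by exact_mod_cast hn
    linarith
  have hhne : h ≠ 0 := by
    rw [hh]; positivity
  have hmono : StrictMonoOn g1 (Set.Ici 0) := by
    apply strictMonoOn_of_deriv_pos (convex_Ici 0) hg1C.continuous.continuousOn
    intro x hx
    rw [interior_Ici] at hx
    exact hg1d1 x hx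
  have hg1pos : ∀ x > (0:ℝ), 0 < g1 x := fun x hx => by
    have := hmono (Set.self_mem_Ici) (le_of_lt hx : (0:ℝ) ≤ x) hx
    rwa [hg10] at this
  obtain ⟨e1, e2, _⟩ := U_aux g1 h hhne hg1pos u1 hu1 k hk2
  exact ⟨e1, e2⟩
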